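/- Let R be a ring, n a non-negative integer, and M a left R-module. The following are equivalent: (1) M is n-weak injective; (2) for every short exact sequence 0 → M → B → C → 0 of left R-modules and every special super finitely presented left R-module K, the induced map Hom_R(K, B) → Hom_R(K, C) is surjective; (3) for every monomorphism M → E with E an injective left R-module and every special super finitely presented left R-module K, the induced map Hom_R(K, E) → Hom_R(K, E/M) is surjective. -/

import Mathlib

/-! Definitions for `n`-weak injective and `n`-weak flat modules over an arbitrary
(associative, unital, possibly noncommutative) ring `R`, following
Amini–Amzil–Bennis, "On n-weak injective and n-weak flat modules".

Left `R`-modules are types with `[Module R M]`; right `R`-modules are types with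
`[Module Rᵐᵒᵖ M]`.  `Ext` is the derived functor of the ℤ-linear Yoneda functor on
`ModuleCat R`, and `Tor` is obtained as the left derived functor of the balanced
tensor product `N ⊗_R -` (constructed as a quotient of the ℤ-tensor product). -/

open CategoryTheory Limits TensorProduct

noncomputable section

universe u

namespace NWeak

variable (R : Type u) [Ring R]

/-- A left `R`-module `U` is *`n`-super finitely presented* if it admits a resolution
`⋯ → F_{n+1} → F_n → ⋯ → F_1 → F_0 → U → 0` by projective modules in which `F_i` is
finitely generated for every `i ≥ n`. -/
def IsNSuperFP (n : ℕ) (U : Type u) [AddCommGroup U] [Module R U] : Prop :=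
  ∃ (F : ℕ → ModuleCat.{u} R) (d : ∀ i, F (i + 1) ⟶ F i) (ε : F 0 →ₗ[R] U),
    (∀ i, Module.Projective R (F i)) ∧
    (∀ i, n ≤ i → Module.Finite R (F i)) ∧
    Function.Surjective ε ∧
    Function.Exact (d 0) ε ∧
    (∀ i, Function.Exact (d (i + 1)) (d i))

/-- A left `R`-module `K` is *special super finitely presented* (relative to `n`) if
there are an `n`-super finitely presented module `U` and a resolution
`⋯ → F_{n+1} → F_n → ⋯ → F_0 → U → 0` as above such that `K ≅ Im (F_n → F_{n-1})`,
where for `n = 0` we read `K_{-1} := U`. -/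
def IsSpecialSFP (n : ℕ) (K : Type u) [AddCommGroup K] [Module R K] : Prop :=
  ∃ (F : ℕ → ModuleCat.{u} R) (d : ∀ i, F (i + 1) ⟶ F i) (U : ModuleCat.{u} R)
    (ε : F 0 ⟶ U),
    (∀ i, Module.Projective R (F i)) ∧
    (∀ i, n ≤ i → Module.Finite R (F i)) ∧
    Function.Surjective ε ∧
    Function.Exact (d 0) ε ∧
    (∀ i, Function.Exact (d (i + 1)) (d i)) ∧
    (match n with
      | 0 => Nonempty (K ≃ₗ[R] U)
      | m + 1 => Nonempty (K ≃ₗ[R] LinearMap.range (d m).hom))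

/-- Vanishing of `Ext_R^i(K, M)` for left `R`-modules. -/
def extVanish (i : ℕ) (K : Type u) [AddCommGroup K] [Module R K]
    (M : Type u) [AddCommGroup M] [Module R M] : Prop :=
  Subsingleton (((Ext ℤ (ModuleCat.{u} R) i).obj
    (Opposite.op (ModuleCat.of R K))).obj (ModuleCat.of R M))

/-- A left `R`-module `M` is *`n`-weak injective* if `Ext_R^{n+1}(U, M) = 0` for every
`n`-super finitely presented left `R`-module `U`. -/
def IsNWeakInjective (n : ℕ) (M : Type u) [AddCommGroup M] [Module R M] : Prop :=
  ∀ (U : ModuleCat.{u} R), IsNSuperFP R n U → extVanish R (n + 1) U M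

/-- The left `R`-module `M` has *`n`-weak injective dimension at most `k`* if
`Ext_R^{k+1}(K, M) = 0` for every special super finitely presented left `R`-module
`K`. -/
def WIDimLE (n k : ℕ) (M : Type u) [AddCommGroup M] [Module R M] : Prop :=
  ∀ (K : ModuleCat.{u} R), IsSpecialSFP R n K → extVanish R (k + 1) K M

/-! ### The balanced tensor product and Tor -/

/-- The additive subgroup of `N ⊗[ℤ] K` generated by the balancing relations
`(n·r) ⊗ k - n ⊗ (r·k)`. -/
def balRel (N : Type u) [AddCommGroup N] [Module Rᵐᵒᵖ N]
    (K : Type u) [AddCommGroup K] [Module R K] : AddSubgroup (N ⊗[ℤ] K) :=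
  AddSubgroup.closure
    {x | ∃ (a : N) (r : R) (b : K),
      x = (MulOpposite.op r • a) ⊗ₜ[ℤ] b - a ⊗ₜ[ℤ] (r • b)}

/-- The balanced tensor product `N ⊗_R K` of a right `R`-module `N` and a left
`R`-module `K`, realized as a quotient of `N ⊗[ℤ] K`. -/
def RTensor (N : Type u) [AddCommGroup N] [Module Rᵐᵒᵖ N]
    (K : Type u) [AddCommGroup K] [Module R K] : Type u :=
  (N ⊗[ℤ] K) ⧸ balRel R N K

instance (N : Type u) [AddCommGroup N] [Module Rᵐᵒᵖ N]
    (K : Type u) [AddCommGroup K] [Module R K] : AddCommGroup (RTensor R N K) :=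
  inferInstanceAs (AddCommGroup ((N ⊗[ℤ] K) ⧸ balRel R N K))

variable {R}

/-- Functoriality of the balanced tensor product in the left-module variable. -/
def balMapRight (N : Type u) [AddCommGroup N] [Module Rᵐᵒᵖ N]
    {K K' : Type u} [AddCommGroup K] [Module R K] [AddCommGroup K'] [Module R K']
    (f : K →ₗ[R] K') : RTensor R N K →+ RTensor R N K' :=
  QuotientAddGroup.map _ _
    (TensorProduct.map (LinearMap.id : N →ₗ[ℤ] N) (f.restrictScalars ℤ)).toAddMonoidHom
    (by
      rw [balRel, AddSubgroup.closure_le]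
      rintro x ⟨a, r, b, rfl⟩
      simp only [SetLike.mem_coe, AddSubgroup.mem_comap, LinearMap.toAddMonoidHom_coe,
        map_sub, TensorProduct.map_tmul, LinearMap.coe_restrictScalars, LinearMap.id_coe,
        id_eq, LinearMap.map_smul]
      exact AddSubgroup.subset_closure ⟨a, r, f b, rfl⟩)

/-- Functoriality of the balanced tensor product in the right-module variable. -/
def balMapLeft (K : Type u) [AddCommGroup K] [Module R K]
    {N N' : Type u} [AddCommGroup N] [Module Rᵐᵒᵖ N] [AddCommGroup N'] [Module Rᵐᵒᵖ N']
    (g : N →ₗ[Rᵐᵒᵖ] N') : RTensor R N K →+ RTensor R N' K :=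
  QuotientAddGroup.map _ _
    (TensorProduct.map (g.restrictScalars ℤ) (LinearMap.id : K →ₗ[ℤ] K)).toAddMonoidHom
    (by
      rw [balRel, AddSubgroup.closure_le]
      rintro x ⟨a, r, b, rfl⟩
      simp only [SetLike.mem_coe, AddSubgroup.mem_comap, LinearMap.toAddMonoidHom_coe,
        map_sub, TensorProduct.map_tmul, LinearMap.coe_restrictScalars, LinearMap.id_coe,
        id_eq, LinearMap.map_smul]
      exact AddSubgroup.subset_closure ⟨g a, r, b, rfl⟩)

lemma balMapRight_mk (N : Type u) [AddCommGroup N] [Module Rᵐᵒᵖ N]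
    {K K' : Type u} [AddCommGroup K] [Module R K] [AddCommGroup K'] [Module R K']
    (f : K →ₗ[R] K') (y : N ⊗[ℤ] K) :
    balMapRight N f (QuotientAddGroup.mk y)
      = QuotientAddGroup.mk (TensorProduct.map (LinearMap.id : N →ₗ[ℤ] N)
          (f.restrictScalars ℤ) y) := rfl

variable (R)

/-- The functor `K ↦ N ⊗_R K` from left `R`-modules to abelian groups, for a fixed
right `R`-module `N`. -/
def tensorFunctor (N : Type u) [AddCommGroup N] [Module Rᵐᵒᵖ N] :
    ModuleCat.{u} R ⥤ AddCommGrpCat.{u} where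
  obj K := AddCommGrpCat.of (RTensor R N K)
  map {K K'} f := AddCommGrpCat.ofHom (balMapRight N f.hom)
  map_id K := by
    refine AddCommGrpCat.ext fun x => ?_
    refine QuotientAddGroup.induction_on x fun y => ?_
    show balMapRight N (LinearMap.id) (QuotientAddGroup.mk y) = QuotientAddGroup.mk y
    rw [balMapRight_mk]
    congr 1
    refine TensorProduct.induction_on y (by simp) (fun a b => by simp) ?_
    intro s t hs ht
    simp_all [map_add]
  map_comp {K K' K''} f g := by
    refine AddCommGrpCat.ext fun x => ?_
    refine QuotientAddGroup.induction_on x fun y => ?_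
    show balMapRight N (g.hom.comp f.hom) (QuotientAddGroup.mk y)
      = balMapRight N g.hom (balMapRight N f.hom (QuotientAddGroup.mk y))
    rw [balMapRight_mk, balMapRight_mk, balMapRight_mk]
    congr 1
    refine TensorProduct.induction_on y (by simp) (fun a b => by simp) ?_
    intro s t hs ht
    simp_all [map_add]

instance (N : Type u) [AddCommGroup N] [Module Rᵐᵒᵖ N] : (tensorFunctor R N).Additive where
  map_add {K K'} {f g} := by
    refine AddCommGrpCat.ext fun x => ?_
    refine QuotientAddGroup.induction_on x fun y => ?_
    show balMapRight N (f.hom + g.hom) (QuotientAddGroup.mk y)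
      = balMapRight N f.hom (QuotientAddGroup.mk y) + balMapRight N g.hom (QuotientAddGroup.mk y)
    rw [balMapRight_mk, balMapRight_mk, balMapRight_mk]
    refine (congrArg (QuotientAddGroup.mk (s := balRel R N K')) ?_).trans
      (QuotientAddGroup.mk_add _ _ _)
    refine TensorProduct.induction_on y (by simp)
      (fun a b => by
        simp only [TensorProduct.map_tmul, LinearMap.coe_restrictScalars, LinearMap.id_coe, id_eq]
        rw [show (f.hom + g.hom) b = f.hom b + g.hom b from rfl, TensorProduct.tmul_add]) ?_
    intro s t hs ht
    simp_all [map_add]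
    abel

/-- Vanishing of `Tor_i^R(N, K)` for a right `R`-module `N` and a left `R`-module `K`:
the `i`-th left derived functor of `N ⊗_R -` vanishes at `K`. -/
def torVanish (i : ℕ) (N : Type u) [AddCommGroup N] [Module Rᵐᵒᵖ N]
    (K : Type u) [AddCommGroup K] [Module R K] : Prop :=
  Subsingleton (((tensorFunctor R N).leftDerived i).obj (ModuleCat.of R K))

/-- A right `R`-module `N` is *`n`-weak flat* if `Tor^R_{n+1}(N, U) = 0` for every
`n`-super finitely presented left `R`-module `U`. -/
def IsNWeakFlat (n : ℕ) (N : Type u) [AddCommGroup N] [Module Rᵐᵒᵖ N] : Prop :=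
  ∀ (U : ModuleCat.{u} R), IsNSuperFP R n U → torVanish R (n + 1) N U

/-- The right `R`-module `N` has *`n`-weak flat dimension at most `k`* if
`Tor^R_{k+1}(N, K) = 0` for every special super finitely presented left `R`-module
`K`. -/
def WFDimLE (n k : ℕ) (N : Type u) [AddCommGroup N] [Module Rᵐᵒᵖ N] : Prop :=
  ∀ (K : ModuleCat.{u} R), IsSpecialSFP R n K → torVanish R (k + 1) N K

/-! ### Character modules -/

/-- The character module `M⋆ = Hom_ℤ(M, ℚ/ℤ)` of a left `R`-module is a right
`R`-module via `(f · r) (m) = f (r · m)`. -/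
instance charModuleRight (M : Type u) [AddCommGroup M] [Module R M] :
    Module Rᵐᵒᵖ (CharacterModule M) where
  smul ρ f := f.comp (DistribMulAction.toAddMonoidHom M ρ.unop)
  one_smul f := CharacterModule.ext _ fun m => congrArg f (one_smul R m)
  mul_smul ρ σ f := CharacterModule.ext _ fun m => congrArg f (mul_smul σ.unop ρ.unop m)
  smul_zero ρ := CharacterModule.ext _ fun _ => rfl
  smul_add ρ f g := CharacterModule.ext _ fun _ => rfl
  add_smul ρ σ f := CharacterModule.ext _ fun m => by
    show f ((ρ.unop + σ.unop) • m) = f (ρ.unop • m) + f (σ.unop • m)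
    rw [add_smul, map_add]
  zero_smul f := CharacterModule.ext _ fun m => by
    show f ((0 : R) • m) = 0
    rw [zero_smul, map_zero]

/-- The character module `N⋆ = Hom_ℤ(N, ℚ/ℤ)` of a right `R`-module is a left
`R`-module via `(r · f) (m) = f (m · r)`. -/
instance charModuleLeft (N : Type u) [AddCommGroup N] [Module Rᵐᵒᵖ N] :
    Module R (CharacterModule N) where
  smul r f := f.comp (DistribMulAction.toAddMonoidHom N (MulOpposite.op r))
  one_smul f := CharacterModule.ext _ fun m => congrArg f (one_smul Rᵐᵒᵖ m)
  mul_smul r s f := CharacterModule.ext _ fun m => congrArg f (by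
    show (MulOpposite.op (r * s)) • m = (MulOpposite.op s) • (MulOpposite.op r) • m
    rw [← mul_smul, MulOpposite.op_mul])
  smul_zero r := CharacterModule.ext _ fun _ => rfl
  smul_add r f g := CharacterModule.ext _ fun _ => rfl
  add_smul r s f := CharacterModule.ext _ fun m => by
    show f ((MulOpposite.op r + MulOpposite.op s) • m)
      = f ((MulOpposite.op r) • m) + f ((MulOpposite.op s) • m)
    rw [add_smul, map_add]
  zero_smul f := CharacterModule.ext _ fun m => by
    show f ((0 : Rᵐᵒᵖ) • m) = 0
    rw [zero_smul, map_zero]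

/-! ### Purity and flatness -/

/-- A submodule `N` of a left `R`-module `M` is *pure* if for every right `R`-module
`L` the induced map `L ⊗_R N → L ⊗_R M` is injective. -/
def IsPureSubmodule (M : Type u) [AddCommGroup M] [Module R M] (N : Submodule R M) :
    Prop :=
  ∀ (L : Type u) [AddCommGroup L] [Module Rᵐᵒᵖ L],
    Function.Injective (balMapRight L N.subtype)

/-- A submodule `N` of a right `R`-module `M` is *pure* if for every left `R`-module
`L` the induced map `N ⊗_R L → M ⊗_R L` is injective. -/
def IsPureSubmoduleRight (M : Type u) [AddCommGroup M] [Module Rᵐᵒᵖ M]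
    (N : Submodule Rᵐᵒᵖ M) : Prop :=
  ∀ (L : Type u) [AddCommGroup L] [Module R L],
    Function.Injective (balMapLeft L N.subtype)

/-- A left `R`-module `M` is *flat* if tensoring with `M` preserves injectivity of
maps of right `R`-modules. -/
def IsFlatLeft (M : Type u) [AddCommGroup M] [Module R M] : Prop :=
  ∀ (A B : Type u) [AddCommGroup A] [Module Rᵐᵒᵖ A] [AddCommGroup B] [Module Rᵐᵒᵖ B]
    (g : A →ₗ[Rᵐᵒᵖ] B), Function.Injective g → Function.Injective (balMapLeft M g)

/-- The left `R`-module `K` has *projective dimension at most `m`*: there is an exact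
sequence `0 → P_m → ⋯ → P_1 → P_0 → K → 0` with all `P_i` projective (encoded by a
projective resolution vanishing in degrees `> m`). -/
def ProjDimLE (K : Type u) [AddCommGroup K] [Module R K] (m : ℕ) : Prop :=
  ∃ (P : ℕ → ModuleCat.{u} R) (d : ∀ i, P (i + 1) ⟶ P i) (ε : P 0 →ₗ[R] K),
    (∀ i, Module.Projective R (P i)) ∧
    Function.Surjective ε ∧
    Function.Exact (d 0) ε ∧
    (∀ i, Function.Exact (d (i + 1)) (d i)) ∧
    (∀ i, m < i → Subsingleton (P i))

end NWeak

namespace NWeakAux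

open CategoryTheory Limits NWeak

variable {R : Type u} [Ring R]

lemma subsingleton_iff_isZero {S : Type*} [Ring S] (X : ModuleCat S) :
    Subsingleton X ↔ IsZero X := by
  refine ⟨fun h => ModuleCat.isZero_of_subsingleton X, fun h => ⟨fun a b => ?_⟩⟩
  have h1 : (𝟙 X : X ⟶ X) = 0 := h.eq_of_src _ _
  have ha : a = (𝟙 X : X ⟶ X) a := rfl
  have hb : b = (𝟙 X : X ⟶ X) b := rfl
  rw [ha, hb, h1]
  rfl

lemma subsingleton_congr_iso {S : Type*} [Ring S] {X Y : ModuleCat S} (i : X ≅ Y) :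
    Subsingleton X ↔ Subsingleton Y := by
  rw [subsingleton_iff_isZero, subsingleton_iff_isZero]
  exact ⟨fun h => CategoryTheory.Limits.IsZero.of_iso h i.symm,
    fun h => CategoryTheory.Limits.IsZero.of_iso h i⟩

lemma exists_factor_of_surjective {A K L : Type u} [AddCommGroup A] [Module R A]
    [AddCommGroup K] [Module R K] [AddCommGroup L] [Module R L]
    (p : A →ₗ[R] K) (hp : Function.Surjective p)
    (q : A →ₗ[R] L) (h : LinearMap.ker p ≤ LinearMap.ker q) :
    ∃ φ : K →ₗ[R] L, φ.comp p = q := by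
  let e := LinearMap.quotKerEquivOfSurjective p hp
  refine ⟨((LinearMap.ker p).liftQ q h).comp e.symm.toLinearMap, ?_⟩
  ext a
  have he : e (Submodule.Quotient.mk a) = p a := by
    simp [e, LinearMap.quotKerEquivOfSurjective, LinearMap.quotKerEquivRange]
  have : e.symm (p a) = Submodule.Quotient.mk a := by
    rw [← he, e.symm_apply_apply]
  simp [this]

lemma exists_lift_of_injective {X M B : Type u} [AddCommGroup X] [Module R X]
    [AddCommGroup M] [Module R M] [AddCommGroup B] [Module R B]
    (f : M →ₗ[R] B) (hf : Function.Injective f)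
    (v : X →ₗ[R] B) (h : ∀ x, v x ∈ LinearMap.range f) :
    ∃ w : X →ₗ[R] M, f.comp w = v := by
  let e := LinearEquiv.ofInjective f hf
  refine ⟨e.symm.toLinearMap.comp (v.codRestrict (LinearMap.range f) h), ?_⟩
  ext x
  have key : ∀ y : LinearMap.range f, f (e.symm y) = (y : B) := fun y => by
    conv_rhs => rw [← e.apply_symm_apply y]
    exact (LinearEquiv.ofInjective_apply f (e.symm y)).symm
  exact key ⟨v x, h x⟩

end NWeakAux

namespace NWeakAux2

open CategoryTheory Limits NWeak NWeakAux

variable {R : Type u} [Ring R]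

structure ResData (U : ModuleCat.{u} R) where
  F : ℕ → ModuleCat.{u} R
  d : ∀ i, F (i + 1) ⟶ F i
  ε : F 0 ⟶ U
  proj : ∀ i, Module.Projective R (F i)
  surj : Function.Surjective ε
  ex0 : Function.Exact (d 0) ε
  exS : ∀ i, Function.Exact (d (i + 1)) (d i)

namespace ResData

variable {U : ModuleCat.{u} R} (D : ResData U)

lemma dd (i : ℕ) : D.d (i + 1) ≫ D.d i = 0 := by
  ext x
  exact (D.exS i).apply_apply_eq_zero x

/-- The chain complex underlying the resolution. -/
def complex : ChainComplex (ModuleCat.{u} R) ℕ := ChainComplex.of D.F D.d D.dd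

instance (i : ℕ) : CategoryTheory.Projective (D.complex.X i) :=
  (IsProjective.iff_projective (D.F i)).mp (D.proj i)

lemma complex_d (i : ℕ) : D.complex.d (i + 1) i = D.d i := by
  simp [complex, ChainComplex.of_d]

lemma dε : D.complex.d 1 0 ≫ D.ε = 0 := by
  rw [D.complex_d 0]
  ext x
  exact D.ex0.apply_apply_eq_zero x

lemma complex_exactAt_succ (i : ℕ) : D.complex.ExactAt (i + 1) := by
  rw [HomologicalComplex.exactAt_iff' _ (i + 1 + 1) (i + 1) i (by simp) (by simp)]
  rw [ShortComplex.moduleCat_exact_iff]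
  intro (x : D.F (i + 1))
  show D.complex.d (i + 1) i x = 0 → _
  rw [D.complex_d i]
  intro hx
  obtain ⟨y, hy⟩ := (D.exS i x).mp hx
  exact ⟨y, by simp [D.complex_d (i + 1)]; exact hy⟩

/-- The projective resolution built from the data. -/
def resolution : ProjectiveResolution U where
  complex := D.complex
  π := (ChainComplex.toSingle₀Equiv _ _).symm ⟨D.ε, D.dε⟩
  quasiIso := ⟨fun n => by
    cases n with
    | zero =>
      rw [ChainComplex.quasiIsoAt₀_iff, ShortComplex.quasiIso_iff_of_zeros']
      · refine (ShortComplex.exact_and_epi_g_iff_of_iso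
          ((ShortComplex.isoMk (Iso.refl _) (Iso.refl _) (Iso.refl _)
            (by simp) (by simp [ChainComplex.toSingle₀Equiv]; rfl)) :
              _ ≅ ShortComplex.mk (D.complex.d 1 0) D.ε D.dε)).2 ⟨?_, ?_⟩
        · rw [ShortComplex.moduleCat_exact_iff]
          intro (x : D.F 0) hx
          obtain ⟨y, hy⟩ := (D.ex0 x).mp hx
          exact ⟨y, by simp [D.complex_d 0]; exact hy⟩
        · exact (ModuleCat.epi_iff_surjective _).mpr D.surj
      all_goals rfl
    | succ n =>
      rw [quasiIsoAt_iff_exactAt']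
      · exact D.complex_exactAt_succ n
      · apply ChainComplex.exactAt_succ_single_obj⟩

end ResData

end NWeakAux2

namespace NWeakAux2

open CategoryTheory Limits NWeak NWeakAux

variable {R : Type u} [Ring R]

namespace ResData

variable {U : ModuleCat.{u} R} (D : ResData U)

lemma extVanish_iff_cocycle (k : ℕ) (M : Type u) [AddCommGroup M] [Module R M] :
    extVanish R (k + 1) (↥U) M ↔
      ∀ t : D.F (k + 1) →ₗ[R] M, t.comp (D.d (k + 1)).hom = 0 →
        ∃ h : D.F k →ₗ[R] M, h.comp (D.d k).hom = t := by
  have iso := D.resolution.isoExt (R := ℤ) (k + 1) (ModuleCat.of R M)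
  rw [show extVanish R (k + 1) (↥U) M ↔
      Subsingleton (((Ext ℤ (ModuleCat.{u} R) (k + 1)).obj
        (Opposite.op U)).obj (ModuleCat.of R M)) from Iff.rfl]
  rw [subsingleton_congr_iso iso]
  set C := D.resolution.complex.linearYonedaObj ℤ (ModuleCat.of R M) with hC
  rw [subsingleton_iff_isZero, ← HomologicalComplex.exactAt_iff_isZero_homology]
  rw [HomologicalComplex.exactAt_iff' _ k (k + 1) (k + 2) (by simp) (by simp)]
  rw [ShortComplex.moduleCat_exact_iff]
  have hg : ∀ t : D.F (k + 1) ⟶ ModuleCat.of R M,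
      (C.sc' k (k + 1) (k + 2)).g t = D.d (k + 1) ≫ t := by
    intro t
    show ((linearYoneda ℤ (ModuleCat.{u} R)).obj (ModuleCat.of R M)).map
      (D.resolution.complex.d (k + 2) (k + 1)).op t = _
    rw [show D.resolution.complex.d (k + 2) (k + 1) = D.d (k + 1) from D.complex_d (k + 1)]
    rfl
  have hf : ∀ h : D.F k ⟶ ModuleCat.of R M,
      (C.sc' k (k + 1) (k + 2)).f h = D.d k ≫ h := by
    intro h
    show ((linearYoneda ℤ (ModuleCat.{u} R)).obj (ModuleCat.of R M)).map
      (D.resolution.complex.d (k + 1) k).op h = _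
    rw [show D.resolution.complex.d (k + 1) k = D.d k from D.complex_d k]
    rfl
  constructor
  · intro hex t ht
    obtain ⟨h, hh⟩ := hex (ModuleCat.ofHom t)
      (by refine (hg _).trans ?_; exact ModuleCat.hom_ext ht)
    exact ⟨h.hom, congrArg ModuleCat.Hom.hom ((hf h).symm.trans hh)⟩
  · intro hco t ht
    obtain ⟨h, hh⟩ := hco t.hom (congrArg ModuleCat.Hom.hom ((hg t).symm.trans ht))
    exact ⟨ModuleCat.ofHom h, (hf _).trans (ModuleCat.hom_ext hh)⟩

end ResData

end NWeakAux2

namespace NWeakAux2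

open CategoryTheory Limits NWeak NWeakAux

variable {R : Type u} [Ring R]

/-- Extract resolution data and a presentation of a special super finitely presented
module. -/
lemma exists_data_of_isSpecialSFP {n : ℕ} {K : Type u} [AddCommGroup K] [Module R K]
    (hK : IsSpecialSFP R n K) :
    ∃ (U : ModuleCat.{u} R) (D : ResData (R := R) U) (p : D.F n →ₗ[R] K),
      IsNSuperFP R n U ∧ Function.Surjective p ∧ Function.Exact (D.d n) p := by
  obtain ⟨F, d, U, ε, proj, fin, surj, ex0, exS, hmatch⟩ := hK
  refine ⟨U, ⟨F, d, ε, proj, surj, ex0, exS⟩, ?_⟩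
  have hU : IsNSuperFP R n U := ⟨F, d, ε.hom, proj, fin, surj, ex0, exS⟩
  match n, hmatch with
  | 0, ⟨e⟩ =>
    refine ⟨e.symm.toLinearMap.comp ε.hom, hU, e.symm.surjective.comp surj, fun y => ?_⟩
    have : e.symm.toLinearMap.comp ε.hom y = 0 ↔ ε.hom y = 0 := by
      simp [LinearEquiv.map_eq_zero_iff]
    exact ⟨fun hy => (ex0 y).mp (this.mp hy), fun hy => this.mpr ((ex0 y).mpr hy)⟩
  | m + 1, ⟨e⟩ =>
    refine ⟨e.symm.toLinearMap.comp (d m).hom.rangeRestrict, hU,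
      e.symm.surjective.comp (d m).hom.surjective_rangeRestrict, fun y => ?_⟩
    have h1 : e.symm.toLinearMap.comp (d m).hom.rangeRestrict y = 0 ↔ (d m) y = 0 := by
      simp [LinearEquiv.map_eq_zero_iff, LinearMap.rangeRestrict, Subtype.ext_iff]
    exact ⟨fun hy => (exS m y).mp (h1.mp hy), fun hy => h1.mpr ((exS m y).mpr hy)⟩

/-- Extract a special super finitely presented syzygy from an `n`-super finitely
presented module. -/
lemma exists_special_of_isNSuperFP {n : ℕ} {U : ModuleCat.{u} R}
    (hU : IsNSuperFP R n (↥U)) :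
    ∃ (D : ResData (R := R) U) (K : ModuleCat.{u} R) (p : D.F n →ₗ[R] ↥K),
      IsSpecialSFP R n (↥K) ∧ Function.Surjective p ∧ Function.Exact (D.d n) p := by
  obtain ⟨F, d, ε, proj, fin, surj, ex0, exS⟩ := hU
  refine ⟨⟨F, d, ModuleCat.ofHom ε, proj, surj, ex0, exS⟩, ?_⟩
  match n with
  | 0 =>
    exact ⟨U, ε, ⟨F, d, U, ModuleCat.ofHom ε, proj, fin, surj, ex0, exS, ⟨LinearEquiv.refl R ↥U⟩⟩, surj, ex0⟩
  | m + 1 =>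
    refine ⟨ModuleCat.of R ↥(LinearMap.range (d m).hom), (d m).hom.rangeRestrict,
      ⟨F, d, U, ModuleCat.ofHom ε, proj, fin, surj, ex0, exS, ⟨LinearEquiv.refl R _⟩⟩,
      (d m).hom.surjective_rangeRestrict, fun y => ?_⟩
    have h1 : (d m).hom.rangeRestrict y = 0 ↔ (d m) y = 0 := by
      simp [LinearMap.rangeRestrict, Subtype.ext_iff]
    exact ⟨fun hy => (exS m y).mp (h1.mp hy), fun hy => h1.mpr ((exS m y).mpr hy)⟩

/-- The lifting property along a short exact sequence, given the cocycle condition. -/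
lemma lift_of_cocycle {U : ModuleCat.{u} R} (D : ResData (R := R) U) {n : ℕ}
    {M B C' : Type u} [AddCommGroup M] [Module R M] [AddCommGroup B] [Module R B]
    [AddCommGroup C'] [Module R C']
    (hco : ∀ t : D.F (n + 1) →ₗ[R] M, t.comp (D.d (n + 1)).hom = 0 →
      ∃ h : D.F n →ₗ[R] M, h.comp (D.d n).hom = t)
    {K : Type u} [AddCommGroup K] [Module R K] (p : D.F n →ₗ[R] K)
    (hps : Function.Surjective p) (hpe : Function.Exact (D.d n) p)
    (f : M →ₗ[R] B) (g : B →ₗ[R] C') (hf : Function.Injective f)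
    (hg : Function.Surjective g) (hfg : Function.Exact f g)
    (φ : K →ₗ[R] C') : ∃ ψ : K →ₗ[R] B, g.comp ψ = φ := by
  haveI : Module.Projective R (D.F n) := D.proj n
  obtain ⟨ℓ, hℓ⟩ := Module.projective_lifting_property g (φ.comp p) hg
  have hrange : ∀ x, (ℓ.comp (D.d n).hom) x ∈ LinearMap.range f := by
    intro x
    have h0 : g (ℓ (D.d n x)) = 0 := by
      have := LinearMap.congr_fun hℓ (D.d n x)
      simp only [LinearMap.comp_apply] at this ⊢
      rw [this, hpe.apply_apply_eq_zero x, map_zero]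
    exact (hfg (ℓ (D.d n x))).mp h0
  obtain ⟨t, ht⟩ := exists_lift_of_injective f hf (ℓ.comp (D.d n).hom) hrange
  obtain ⟨h, hh⟩ := hco t (by
    refine LinearMap.ext fun x => hf ?_
    have h1 := LinearMap.congr_fun ht (D.d (n + 1) x)
    simp only [LinearMap.comp_apply] at h1
    simp only [LinearMap.comp_apply, LinearMap.zero_apply]
    rw [h1, (D.exS n).apply_apply_eq_zero x, map_zero, map_zero])
  set ℓ' : D.F n →ₗ[R] B := ℓ - f.comp h with hℓ'
  obtain ⟨ψ, hψ⟩ := exists_factor_of_surjective p hps ℓ' (by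
    intro y hy
    rw [LinearMap.mem_ker] at hy ⊢
    obtain ⟨x, rfl⟩ := (hpe y).mp hy
    have h2 := LinearMap.congr_fun ht x
    have h3 := LinearMap.congr_fun hh x
    simp only [LinearMap.comp_apply] at h2 h3
    simp only [hℓ', LinearMap.sub_apply, LinearMap.comp_apply, h3, h2, sub_self])
  refine ⟨ψ, LinearMap.ext fun y => ?_⟩
  obtain ⟨x, rfl⟩ := hps y
  have h4 := LinearMap.congr_fun hψ x
  have h5 := LinearMap.congr_fun hℓ x
  simp only [LinearMap.comp_apply] at h4 h5 ⊢
  rw [h4]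
  simp only [hℓ', LinearMap.sub_apply, LinearMap.comp_apply, map_sub, h5,
    hfg.apply_apply_eq_zero (h x), sub_zero]

/-- The cocycle condition, given the lifting property against `E → E/M` for an
injective module `E`. -/
lemma cocycle_of_lift {U : ModuleCat.{u} R} (D : ResData (R := R) U) {n : ℕ}
    {M E : Type u} [AddCommGroup M] [Module R M] [AddCommGroup E] [Module R E]
    (hE : CategoryTheory.Injective (ModuleCat.of R E))
    (f : M →ₗ[R] E) (hf : Function.Injective f)
    {K : Type u} [AddCommGroup K] [Module R K] (p : D.F n →ₗ[R] K)
    (hps : Function.Surjective p) (hpe : Function.Exact (D.d n) p)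
    (hlift : ∀ φ : K →ₗ[R] (E ⧸ LinearMap.range f), ∃ ψ : K →ₗ[R] E,
      (LinearMap.range f).mkQ.comp ψ = φ) :
    ∀ t : D.F (n + 1) →ₗ[R] M, t.comp (D.d (n + 1)).hom = 0 →
      ∃ h : D.F n →ₗ[R] M, h.comp (D.d n).hom = t := by
  intro t ht
  haveI := hE
  -- Step 1: construct `e₀ : F n → E` with `e₀ ∘ d n = f ∘ t`.
  have hkill : LinearMap.ker (D.d n).hom ≤
      LinearMap.ker (f.comp t) := by
    intro x hx
    rw [LinearMap.mem_ker] at hx ⊢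
    obtain ⟨y, rfl⟩ := (D.exS n x).mp hx
    have := LinearMap.congr_fun ht y
    simp only [LinearMap.comp_apply, LinearMap.zero_apply] at this ⊢
    rw [this, map_zero]
  set q := LinearMap.quotKerEquivRange (D.d n).hom with hq
  set u : ↥(LinearMap.range (D.d n).hom) →ₗ[R] E :=
    ((LinearMap.ker (D.d n).hom).liftQ (f.comp t) hkill).comp
      q.symm.toLinearMap with hu
  have hu' : ∀ x : D.F (n + 1), u ⟨D.d n x, LinearMap.mem_range_self _ x⟩ = f (t x) := by
    intro x
    have hqx : q.symm ⟨D.d n x, LinearMap.mem_range_self _ x⟩ =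
        Submodule.Quotient.mk x := by
      apply q.injective
      rw [q.apply_symm_apply]
      exact Subtype.ext (LinearMap.quotKerEquivRange_apply_mk _ x).symm
    simp [hu, hqx]
  have hmono : Mono (ModuleCat.ofHom
      (LinearMap.range (D.d n).hom).subtype :
      ModuleCat.of R ↥(LinearMap.range (D.d n).hom) ⟶ D.F n) :=
    (ModuleCat.mono_iff_injective _).mpr (Submodule.injective_subtype _)
  set e₀ : D.F n →ₗ[R] E := (Injective.factorThru (ModuleCat.ofHom u)
    (ModuleCat.ofHom (LinearMap.range (D.d n).hom).subtype)).hom with he₀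
  have he₀' : ∀ x : D.F (n + 1), e₀ (D.d n x) = f (t x) := by
    intro x
    have := LinearMap.congr_fun (congrArg ModuleCat.Hom.hom
      (Injective.comp_factorThru (ModuleCat.ofHom u)
        (ModuleCat.ofHom (LinearMap.range (D.d n).hom).subtype)))
      ⟨D.d n x, LinearMap.mem_range_self _ x⟩
    simp only [ModuleCat.hom_comp, ModuleCat.hom_ofHom, LinearMap.comp_apply] at this
    rw [← hu' x]
    exact this
  -- Step 2: push down to `E ⧸ range f` and factor through `K`.
  set g₁ : D.F n →ₗ[R] (E ⧸ LinearMap.range f) := (LinearMap.range f).mkQ.comp e₀ with hg₁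
  obtain ⟨φ, hφ⟩ := exists_factor_of_surjective p hps g₁ (by
    intro y hy
    rw [LinearMap.mem_ker] at hy ⊢
    obtain ⟨x, rfl⟩ := (hpe y).mp hy
    simp only [hg₁, LinearMap.comp_apply, he₀' x]
    rw [← LinearMap.mem_ker, Submodule.ker_mkQ]
    exact LinearMap.mem_range_self _ _)
  obtain ⟨ψ, hψ⟩ := hlift φ
  -- Step 3: correct `e₀` by `ψ ∘ p` and pull back along `f`.
  set v : D.F n →ₗ[R] E := e₀ - ψ.comp p with hv
  have hvr : ∀ x, v x ∈ LinearMap.range f := by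
    intro x
    have h1 : (LinearMap.range f).mkQ (v x) = 0 := by
      have h2 := LinearMap.congr_fun hφ x
      have h3 := LinearMap.congr_fun hψ (p x)
      simp only [LinearMap.comp_apply] at h2 h3
      simp only [hv, LinearMap.sub_apply, LinearMap.comp_apply, map_sub, h3, h2, hg₁,
        LinearMap.comp_apply, sub_self]
    rwa [← LinearMap.mem_ker, Submodule.ker_mkQ] at h1
  obtain ⟨w, hw⟩ := exists_lift_of_injective f hf v hvr
  refine ⟨w, LinearMap.ext fun x => hf ?_⟩
  have h6 := LinearMap.congr_fun hw (D.d n x)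
  simp only [LinearMap.comp_apply] at h6 ⊢
  rw [h6]
  simp only [hv, LinearMap.sub_apply, LinearMap.comp_apply, he₀' x,
    hpe.apply_apply_eq_zero x, map_zero, sub_zero]

end NWeakAux2


open NWeak in
/-- For a left `R`-module `M`, the following are equivalent:
(1) `M` is `n`-weak injective;
(2) for every short exact sequence `0 → M → B → C → 0` and every special super finitely
presented module `K`, the induced map `Hom_R(K, B) → Hom_R(K, C)` is surjective;
(3) for every embedding of `M` into an injective module `E` and every special super
finitely presented `K`, the induced map `Hom_R(K, E) → Hom_R(K, E/M)` is surjective. -/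
theorem isNWeakInjective_iff_superpure
    (R : Type u) [Ring R] (n : ℕ) (M : Type u) [AddCommGroup M] [Module R M] :
    (IsNWeakInjective R n M ↔
      (∀ (B C : Type u) [AddCommGroup B] [Module R B] [AddCommGroup C] [Module R C]
        (f : M →ₗ[R] B) (g : B →ₗ[R] C),
        Function.Injective f → Function.Surjective g → Function.Exact f g →
        ∀ (K : Type u) [AddCommGroup K] [Module R K], IsSpecialSFP R n K →
          ∀ φ : K →ₗ[R] C, ∃ ψ : K →ₗ[R] B, g.comp ψ = φ)) ∧
    (IsNWeakInjective R n M ↔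
      (∀ (E : Type u) [AddCommGroup E] [Module R E],
        CategoryTheory.Injective (ModuleCat.of R E) →
        ∀ f : M →ₗ[R] E, Function.Injective f →
        ∀ (K : Type u) [AddCommGroup K] [Module R K], IsSpecialSFP R n K →
          ∀ φ : K →ₗ[R] (E ⧸ LinearMap.range f), ∃ ψ : K →ₗ[R] E,
            (LinearMap.range f).mkQ.comp ψ = φ)) := by
  have h12 : IsNWeakInjective R n M →
      (∀ (B C : Type u) [AddCommGroup B] [Module R B] [AddCommGroup C] [Module R C]
        (f : M →ₗ[R] B) (g : B →ₗ[R] C),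
        Function.Injective f → Function.Surjective g → Function.Exact f g →
        ∀ (K : Type u) [AddCommGroup K] [Module R K], IsSpecialSFP R n K →
          ∀ φ : K →ₗ[R] C, ∃ ψ : K →ₗ[R] B, g.comp ψ = φ) := by
    intro h1 B C _ _ _ _ f g hf hg hfg K _ _ hK φ
    obtain ⟨U, D, p, hU, hps, hpe⟩ := NWeakAux2.exists_data_of_isSpecialSFP hK
    exact NWeakAux2.lift_of_cocycle D
      ((D.extVanish_iff_cocycle n M).mp (h1 U hU)) p hps hpe f g hf hg hfg φ
  have h23 : (∀ (B C : Type u) [AddCommGroup B] [Module R B] [AddCommGroup C] [Module R C]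
        (f : M →ₗ[R] B) (g : B →ₗ[R] C),
        Function.Injective f → Function.Surjective g → Function.Exact f g →
        ∀ (K : Type u) [AddCommGroup K] [Module R K], IsSpecialSFP R n K →
          ∀ φ : K →ₗ[R] C, ∃ ψ : K →ₗ[R] B, g.comp ψ = φ) →
      (∀ (E : Type u) [AddCommGroup E] [Module R E],
        CategoryTheory.Injective (ModuleCat.of R E) →
        ∀ f : M →ₗ[R] E, Function.Injective f →
        ∀ (K : Type u) [AddCommGroup K] [Module R K], IsSpecialSFP R n K →
          ∀ φ : K →ₗ[R] (E ⧸ LinearMap.range f), ∃ ψ : K →ₗ[R] E,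
            (LinearMap.range f).mkQ.comp ψ = φ) := by
    intro h2 E _ _ _hE f hf K _ _ hK φ
    exact h2 E (E ⧸ LinearMap.range f) f (LinearMap.range f).mkQ hf
      (Submodule.mkQ_surjective _) (LinearMap.exact_iff.mpr (Submodule.ker_mkQ _)) K hK φ
  have h31 : (∀ (E : Type u) [AddCommGroup E] [Module R E],
        CategoryTheory.Injective (ModuleCat.of R E) →
        ∀ f : M →ₗ[R] E, Function.Injective f →
        ∀ (K : Type u) [AddCommGroup K] [Module R K], IsSpecialSFP R n K →
          ∀ φ : K →ₗ[R] (E ⧸ LinearMap.range f), ∃ ψ : K →ₗ[R] E,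
            (LinearMap.range f).mkQ.comp ψ = φ) →
      IsNWeakInjective R n M := by
    intro h3 U hU
    obtain ⟨D, K, p, hKsp, hps, hpe⟩ := NWeakAux2.exists_special_of_isNSuperFP hU
    set E := CategoryTheory.Injective.under (ModuleCat.of R M) with hE
    have hEinj : CategoryTheory.Injective (ModuleCat.of R ↥E) := by
      show CategoryTheory.Injective E
      infer_instance
    set f : M →ₗ[R] ↥E := (CategoryTheory.Injective.ι (ModuleCat.of R M) :
      ModuleCat.of R M ⟶ E).hom with hf
    have hfinj : Function.Injective f := by
      rw [hf]
      exact (ModuleCat.mono_iff_injective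
        (CategoryTheory.Injective.ι (ModuleCat.of R M))).mp inferInstance
    have hlift := h3 ↥E hEinj f hfinj ↥K hKsp
    exact (D.extVanish_iff_cocycle n M).mpr
      (NWeakAux2.cocycle_of_lift D hEinj f hfinj p hps hpe hlift)
  exact ⟨⟨h12, fun h2 => h31 (h23 h2)⟩, ⟨fun h1 => h23 (h12 h1), h31⟩⟩
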